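/- Let G be a finite simple graph and v ∈ ker(G). Then ker(G − v) ⊆ ker(G) \ {v}. -/

import Mathlib

open Finset

namespace CritGraph

variable {V : Type*} [Fintype V] [DecidableEq V]

/-- The neighborhood of a set of vertices `X`:
all vertices having at least one neighbor in `X`. -/
def nbhd (G : SimpleGraph V) [DecidableRel G.Adj] (X : Finset V) : Finset V :=
  univ.filter fun v => ∃ x ∈ X, G.Adj v x

/-- The difference `d(X) = |X| - |N(X)|` of a set of vertices `X`. -/
def diff (G : SimpleGraph V) [DecidableRel G.Adj] (X : Finset V) : ℤ :=
  (X.card : ℤ) - ((nbhd G X).card : ℤ)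

/-- A set of vertices is independent if no two of its vertices are adjacent. -/
def IsIndep (G : SimpleGraph V) (S : Finset V) : Prop :=
  ∀ u ∈ S, ∀ v ∈ S, ¬ G.Adj u v

instance (G : SimpleGraph V) [DecidableRel G.Adj] : DecidablePred (IsIndep G) := fun S =>
  inferInstanceAs (Decidable (∀ u ∈ S, ∀ v ∈ S, ¬ G.Adj u v))

/-- The critical difference `d_c(G) = max {d(X) : X ⊆ V}`. -/
def dC (G : SimpleGraph V) [DecidableRel G.Adj] : ℤ :=
  (univ : Finset V).powerset.sup' (Finset.powerset_nonempty _) (diff G)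

/-- The critical independence difference `id_c(G) = max {d(I) : I independent}`. -/
def idC (G : SimpleGraph V) [DecidableRel G.Adj] : ℤ :=
  ((univ : Finset V).powerset.filter (IsIndep G)).sup'
    ⟨∅, by simp [IsIndep]⟩ (diff G)

/-- `A` is a critical independent set: `A` is independent and
`d(A) = max {d(I) : I independent}`. -/
def IsCritIndep (G : SimpleGraph V) [DecidableRel G.Adj] (A : Finset V) : Prop :=
  IsIndep G A ∧ ∀ I : Finset V, IsIndep G I → diff G I ≤ diff G A

instance (G : SimpleGraph V) [DecidableRel G.Adj] : DecidablePred (IsCritIndep G) := fun A =>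
  inferInstanceAs (Decidable (IsIndep G A ∧ ∀ I : Finset V, IsIndep G I → diff G I ≤ diff G A))

/-- `ker(G)`: the intersection of all critical independent sets of `G`. -/
def kerG (G : SimpleGraph V) [DecidableRel G.Adj] : Finset V :=
  univ.filter fun v => ∀ A : Finset V, IsCritIndep G A → v ∈ A

/-- `G - v`: the induced subgraph of `G` on `V \ {v}`. -/
def deleteVert (G : SimpleGraph V) (v : V) : SimpleGraph {u : V // u ≠ v} :=
  G.comap Subtype.val

instance (G : SimpleGraph V) (v : V) [DecidableRel G.Adj] :
    DecidableRel (deleteVert G v).Adj := fun a b =>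
  inferInstanceAs (Decidable (G.Adj a.val b.val))

/-- `S` is an inclusion-minimal independent set with positive difference. -/
def MinPosIndep (G : SimpleGraph V) [DecidableRel G.Adj] (S : Finset V) : Prop :=
  IsIndep G S ∧ 0 < diff G S ∧ ∀ S' ⊂ S, ¬ (IsIndep G S' ∧ 0 < diff G S')

/-- `S` is a maximum independent set. -/
def IsMaxIndep (G : SimpleGraph V) (S : Finset V) : Prop :=
  IsIndep G S ∧ ∀ I : Finset V, IsIndep G I → I.card ≤ S.card

instance (G : SimpleGraph V) [DecidableRel G.Adj] : DecidablePred (IsMaxIndep G) := fun S =>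
  inferInstanceAs (Decidable (IsIndep G S ∧ ∀ I : Finset V, IsIndep G I → I.card ≤ S.card))

/-- `core(G)`: the intersection of all maximum independent sets of `G`. -/
def coreG (G : SimpleGraph V) [DecidableRel G.Adj] : Finset V :=
  univ.filter fun v => ∀ A : Finset V, IsMaxIndep G A → v ∈ A


set_option linter.unusedSectionVars false

-- ### auxiliary lemmas

variable (G : SimpleGraph V) [DecidableRel G.Adj]

lemma mem_nbhd {X : Finset V} {w : V} : w ∈ nbhd G X ↔ ∃ x ∈ X, G.Adj w x := by
  simp [nbhd]

lemma nbhd_mono {X Y : Finset V} (h : X ⊆ Y) : nbhd G X ⊆ nbhd G Y := by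
  intro w hw
  obtain ⟨x, hx, hadj⟩ := (mem_nbhd G).1 hw
  exact (mem_nbhd G).2 ⟨x, h hx, hadj⟩

lemma nbhd_union (X Y : Finset V) : nbhd G (X ∪ Y) = nbhd G X ∪ nbhd G Y := by
  ext w
  simp only [mem_nbhd, mem_union]
  constructor
  · rintro ⟨x, hx | hx, hadj⟩
    · exact Or.inl ⟨x, hx, hadj⟩
    · exact Or.inr ⟨x, hx, hadj⟩
  · rintro (⟨x, hx, hadj⟩ | ⟨x, hx, hadj⟩)
    · exact ⟨x, Or.inl hx, hadj⟩
    · exact ⟨x, Or.inr hx, hadj⟩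

lemma nbhd_inter_subset (X Y : Finset V) : nbhd G (X ∩ Y) ⊆ nbhd G X ∩ nbhd G Y :=
  subset_inter (nbhd_mono G inter_subset_left) (nbhd_mono G inter_subset_right)

lemma indep_subset {S T : Finset V} (h : IsIndep G T) (hs : S ⊆ T) : IsIndep G S :=
  fun a ha b hb => h a (hs ha) b (hs hb)

lemma diff_le_idC {I : Finset V} (hI : IsIndep G I) : diff G I ≤ idC G := by
  rw [idC]
  apply Finset.le_sup'
  simp [hI]

lemma crit_of_indep_idC {A : Finset V} (hA : IsIndep G A) (h : diff G A = idC G) :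
    IsCritIndep G A :=
  ⟨hA, fun I hI => h ▸ diff_le_idC G hI⟩

lemma crit_diff_eq {A : Finset V} (hA : IsCritIndep G A) : diff G A = idC G := by
  refine le_antisymm (diff_le_idC G hA.1) ?_
  obtain ⟨B, hB, hBeq⟩ := Finset.exists_mem_eq_sup'
    (⟨∅, by simp [IsIndep]⟩ : ((univ : Finset V).powerset.filter (IsIndep G)).Nonempty) (diff G)
  rw [idC, hBeq]
  exact hA.2 B (mem_filter.1 hB).2

-- Zhang-style lemma
lemma indep_sdiff_nbhd (X : Finset V) : IsIndep G (X \ nbhd G X) := by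
  intro a ha b hb hadj
  exact (mem_sdiff.1 ha).2 ((mem_nbhd G).2 ⟨b, (mem_sdiff.1 hb).1, hadj⟩)

lemma diff_le_diff_sdiff_nbhd (X : Finset V) : diff G X ≤ diff G (X \ nbhd G X) := by
  have hcard : (X \ nbhd G X).card + (X ∩ nbhd G X).card = X.card :=
    Finset.card_sdiff_add_card_inter X (nbhd G X)
  have hdisj : Disjoint (nbhd G (X \ nbhd G X)) (X ∩ nbhd G X) := by
    rw [Finset.disjoint_left]
    intro w hw hw2
    obtain ⟨y, hy, hadj⟩ := (mem_nbhd G).1 hw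
    exact (mem_sdiff.1 hy).2 ((mem_nbhd G).2 ⟨w, (mem_inter.1 hw2).1, hadj.symm⟩)
  have hsub : nbhd G (X \ nbhd G X) ∪ (X ∩ nbhd G X) ⊆ nbhd G X :=
    union_subset (nbhd_mono G sdiff_subset) inter_subset_right
  have hle : (nbhd G (X \ nbhd G X)).card + (X ∩ nbhd G X).card ≤ (nbhd G X).card := by
    rw [← Finset.card_union_of_disjoint hdisj]
    exact card_le_card hsub
  unfold diff
  omega

lemma diff_supermod (A I : Finset V) :
    diff G A + diff G I ≤ diff G (A ∪ I) + diff G (A ∩ I) := by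
  have h1 : (A ∪ I).card + (A ∩ I).card = A.card + I.card :=
    Finset.card_union_add_card_inter A I
  have h2 : (nbhd G (A ∪ I)).card + (nbhd G A ∩ nbhd G I).card
      = (nbhd G A).card + (nbhd G I).card := by
    rw [nbhd_union]
    exact Finset.card_union_add_card_inter _ _
  have h3 : (nbhd G (A ∩ I)).card ≤ (nbhd G A ∩ nbhd G I).card :=
    card_le_card (nbhd_inter_subset G A I)
  unfold diff
  omega

-- ### deletion lemmas

variable (v : V)

lemma isIndep_deleteVert_iff (S : Finset {u : V // u ≠ v}) :
    IsIndep (deleteVert G v) S ↔ IsIndep G (S.image Subtype.val) := by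
  constructor
  · intro h a ha b hb hadj
    obtain ⟨a', ha', rfl⟩ := mem_image.1 ha
    obtain ⟨b', hb', rfl⟩ := mem_image.1 hb
    exact h a' ha' b' hb' hadj
  · intro h a ha b hb hadj
    exact h a.val (mem_image_of_mem _ ha) b.val (mem_image_of_mem _ hb) hadj

lemma nbhd_deleteVert (S : Finset {u : V // u ≠ v}) :
    nbhd (deleteVert G v) S = (nbhd G (S.image Subtype.val)).subtype (· ≠ v) := by
  ext w
  simp only [Finset.mem_subtype, mem_nbhd]
  constructor
  · rintro ⟨x, hx, hadj⟩
    exact ⟨x.val, mem_image_of_mem _ hx, hadj⟩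
  · rintro ⟨x, hx, hadj⟩
    obtain ⟨x', hx', rfl⟩ := mem_image.1 hx
    exact ⟨x', hx', hadj⟩

lemma card_nbhd_deleteVert (S : Finset {u : V // u ≠ v}) :
    (nbhd (deleteVert G v) S).card = ((nbhd G (S.image Subtype.val)).erase v).card := by
  rw [nbhd_deleteVert, Finset.card_subtype, Finset.filter_ne']

lemma diff_deleteVert (S : Finset {u : V // u ≠ v}) :
    diff (deleteVert G v) S = diff G (S.image Subtype.val)
      + (if v ∈ nbhd G (S.image Subtype.val) then 1 else 0) := by
  unfold diff
  rw [Finset.card_image_of_injective _ Subtype.val_injective, card_nbhd_deleteVert]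
  by_cases h : v ∈ nbhd G (S.image Subtype.val)
  · rw [if_pos h, Finset.card_erase_of_mem h]
    have : 0 < (nbhd G (S.image Subtype.val)).card := Finset.card_pos.2 ⟨v, h⟩
    push_cast
    omega
  · rw [if_neg h, Finset.erase_eq_of_notMem h]
    ring


/-- If `v ∈ ker(G)`, then `ker(G - v) ⊆ ker(G) \ {v}`. -/
theorem kerG_deleteVert_subset (G : SimpleGraph V) [DecidableRel G.Adj]
    (v : V) (hv : v ∈ kerG G) :
    (kerG (deleteVert G v)).image Subtype.val ⊆ kerG G \ {v} := by
  have hvmem : ∀ A : Finset V, IsCritIndep G A → v ∈ A := (mem_filter.1 hv).2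
  intro u hu
  obtain ⟨u', hu', rfl⟩ := mem_image.1 hu
  have hu'' : ∀ B : Finset {x : V // x ≠ v}, IsCritIndep (deleteVert G v) B → u' ∈ B :=
    (mem_filter.1 hu').2
  rw [mem_sdiff, mem_singleton]
  refine ⟨?_, u'.2⟩
  rw [kerG, mem_filter]
  refine ⟨mem_univ _, fun A hA => ?_⟩
  have hvA : v ∈ A := hvmem A hA
  have hAind : IsIndep G A := hA.1
  have hAid : diff G A = idC G := crit_diff_eq G hA
  have hvnA : v ∉ nbhd G A := by
    intro h
    obtain ⟨a, haA, hadj⟩ := (mem_nbhd G).1 h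
    exact hAind v hvA a haA hadj
  set A' : Finset {x : V // x ≠ v} := (A.erase v).subtype (· ≠ v) with hA'
  have hA'img : A'.image Subtype.val = A.erase v := by
    ext x
    simp only [hA', mem_image, Finset.mem_subtype]
    constructor
    · rintro ⟨y, hy, rfl⟩; exact hy
    · intro hx
      exact ⟨⟨x, ne_of_mem_erase hx⟩, hx, rfl⟩
  have hvnA' : v ∉ nbhd G (A.erase v) := fun h => hvnA (nbhd_mono G (erase_subset v A) h)
  have hdA' : diff (deleteVert G v) A' = diff G (A.erase v) := by
    rw [diff_deleteVert, hA'img, if_neg hvnA', add_zero]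
  have htlb : idC G - 1 ≤ diff (deleteVert G v) A' := by
    rw [hdA']
    have h1 : (A.erase v).card = A.card - 1 := card_erase_of_mem hvA
    have h2 : (nbhd G (A.erase v)).card ≤ (nbhd G A).card :=
      card_le_card (nbhd_mono G (erase_subset v A))
    have h3 : 0 < A.card := card_pos.2 ⟨v, hvA⟩
    rw [← hAid]
    unfold diff
    omega
  have hA'crit : IsCritIndep (deleteVert G v) A' := by
    refine ⟨?_, ?_⟩
    · rw [isIndep_deleteVert_iff, hA'img]
      exact indep_subset G hAind (erase_subset v A)
    · intro I' hI'
      by_contra hcon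
      push_neg at hcon
      have hIind : IsIndep G (I'.image Subtype.val) := (isIndep_deleteVert_iff G v I').1 hI'
      set I := I'.image Subtype.val with hIdef
      have hvnI : v ∉ I := by
        intro h
        obtain ⟨y, _, hy⟩ := mem_image.1 h
        exact y.2 hy
      have hIdiff : diff (deleteVert G v) I'
          = diff G I + (if v ∈ nbhd G I then 1 else 0) := diff_deleteVert G v I'
      by_cases hvN : v ∈ nbhd G I
      · rw [if_pos hvN] at hIdiff
        have hd1 : idC G - 1 ≤ diff G I := by omega
        have hvZ : v ∈ nbhd G (A ∪ I) := nbhd_mono G subset_union_right hvN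
        have hWv : v ∉ (A ∪ I) \ nbhd G (A ∪ I) := fun h => (mem_sdiff.1 h).2 hvZ
        have hWd : diff G ((A ∪ I) \ nbhd G (A ∪ I)) < idC G := by
          rcases lt_or_eq_of_le (diff_le_idC G (indep_sdiff_nbhd G (A ∪ I))) with h | h
          · exact h
          · exact absurd (hvmem _ (crit_of_indep_idC G (indep_sdiff_nbhd G (A ∪ I)) h)) hWv
        have hZd : diff G (A ∪ I) < idC G :=
          lt_of_le_of_lt (diff_le_diff_sdiff_nbhd G (A ∪ I)) hWd
        have hAI : diff G (A ∩ I) < idC G := by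
          rcases lt_or_eq_of_le (diff_le_idC G (indep_subset G hAind inter_subset_left)) with h | h
          · exact h
          · exfalso
            have := hvmem _ (crit_of_indep_idC G (indep_subset G hAind inter_subset_left) h)
            exact hvnI (mem_inter.1 this).2
        have := diff_supermod G A I
        omega
      · rw [if_neg hvN, add_zero] at hIdiff
        have hge : idC G ≤ diff G I := by omega
        have heq : diff G I = idC G := le_antisymm (diff_le_idC G hIind) hge
        exact hvnI (hvmem I (crit_of_indep_idC G hIind heq))
  have hmem : u'.val ∈ A.erase v := by
    rw [← hA'img]
    exact mem_image_of_mem _ (hu'' A' hA'crit)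
  exact mem_of_mem_erase hmem

end CritGraph
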